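/- If X ⊆ [ω]^ω is an independent family, then the set H = { x ∈ [ω]^ω : there exist disjoint finite F, G ⊆ X with σ(F,G) \ x finite } is meager in [ω]^ω (and symmetrically K = { x : there exist disjoint finite F, G ⊆ X with σ(F,G) ∩ x finite } is meager), provided H (respectively K) has the Baire property. -/

import Mathlib

abbrev Cantor : Type := ℕ → Bool

def cset (x : Cantor) : Set ℕ := {n | x n = true}

/-- `σ(F,G) = ⋂_{a∈F} a ∩ ⋂_{b∈G} (ω \ b)`. -/
def sigmaFG (F G : Finset (Set ℕ)) : Set ℕ :=
  (⋂ a ∈ (F : Set (Set ℕ)), a) ∩ ⋂ b ∈ (G : Set (Set ℕ)), bᶜ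

/-- `X` is an independent family. -/
def IsIndependentFamily (X : Set (Set ℕ)) : Prop :=
  ∀ F G : Finset (Set ℕ), ↑F ⊆ X → ↑G ⊆ X → Disjoint F G → (sigmaFG F G).Infinite

/-- `S` has the Baire property. -/
def HasBP (S : Set Cantor) : Prop :=
  ∃ U : Set Cantor, IsOpen U ∧ IsMeagre ((S \ U) ∪ (U \ S))

namespace HKAux

open Set

/-! ### Cylinders -/

def cyl (N : ℕ) (x : Cantor) : Set Cantor := {y | ∀ i < N, y i = x i}

lemma self_mem_cyl (N : ℕ) (x : Cantor) : x ∈ cyl N x := fun _ _ => rfl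

lemma isOpen_cyl (N : ℕ) (x : Cantor) : IsOpen (cyl N x) := by
  have : cyl N x = ⋂ i : Fin N, {y : Cantor | y i = x i} := by
    ext y; simp only [cyl, mem_setOf_eq, mem_iInter]
    exact ⟨fun h i => h i i.2, fun h i hi => h ⟨i, hi⟩⟩
  rw [this]
  refine isOpen_iInter_of_finite fun i => ?_
  have : {y : Cantor | y i = x i} = (fun y : Cantor => y (i : ℕ)) ⁻¹' {x i} := by
    ext y; simp
  rw [this]
  exact (isOpen_discrete _).preimage (continuous_apply (i : ℕ))

lemma exists_cyl_subset {U : Set Cantor} (hU : IsOpen U) {y : Cantor} (hy : y ∈ U) :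
    ∃ N, cyl N y ⊆ U := by
  obtain ⟨I, u, h1, h2⟩ := isOpen_pi_iff.1 hU y hy
  refine ⟨I.sup id + 1, fun z hz => h2 ?_⟩
  intro a ha
  have : z a = y a := hz a (Nat.lt_succ_of_le (Finset.le_sup (f := id) ha))
  rw [this]
  exact (h1 a ha).2

lemma uncountable_cantor : Uncountable Cantor := by
  rw [← not_countable_iff]
  intro h
  have hg : Function.Injective (fun s : Set ℕ => (open Classical in fun n => decide (n ∈ s) : Cantor)) := by
    intro s t hst
    ext n
    have := congrFun hst n
    simp only [decide_eq_decide] at this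
    exact this
  obtain ⟨f, hf⟩ := Countable.exists_injective_nat Cantor
  exact Function.cantor_injective (f ∘ _) (hf.comp hg)

/-! ### Indexing of binary strings -/

def idx : List Bool → ℕ
  | [] => 0
  | b :: rest => (cond b 1 0) + 2 * idx rest

def strOf : ℕ → ℕ → List Bool
  | 0, _ => []
  | n + 1, k => decide (k % 2 = 1) :: strOf n (k / 2)

lemma strOf_idx (σ : List Bool) : strOf σ.length (idx σ) = σ := by
  induction σ with
  | nil => rfl
  | cons b rest ih =>
    simp only [List.length_cons, strOf, idx]
    have h1 : ((cond b 1 0) + 2 * idx rest) / 2 = idx rest := by cases b <;> simp <;> omega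
    have h2 : (decide (((cond b 1 0) + 2 * idx rest) % 2 = 1)) = b := by
      cases b <;> simp <;> omega
    rw [h1, ih, h2]

lemma idx_lt (σ : List Bool) : idx σ < 2 ^ σ.length := by
  induction σ with
  | nil => simp [idx]
  | cons b rest ih =>
    simp only [idx, List.length_cons, pow_succ]
    cases b <;> simp <;> omega

lemma idx_inj {σ τ : List Bool} (h : σ.length = τ.length) (hi : idx σ = idx τ) : σ = τ := by
  have := strOf_idx σ
  rw [hi, h, strOf_idx τ] at this
  exact this.symm

/-! ### Prefixes of an element of Cantor space -/

def str (z : Cantor) (n : ℕ) : List Bool := List.ofFn fun i : Fin n => z i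

@[simp] lemma str_length (z : Cantor) (n : ℕ) : (str z n).length = n := by
  simp [str]

lemma str_succ (z : Cantor) (n : ℕ) : str z (n + 1) = str z n ++ [z n] := by
  unfold str
  rw [List.ofFn_succ']
  simp [List.concat_eq_append]

lemma str_dropLast (z : Cantor) (n : ℕ) : (str z (n + 1)).dropLast = str z n := by
  rw [str_succ]
  exact List.dropLast_concat

lemma str_prefix (z : Cantor) {m n : ℕ} (h : m ≤ n) : str z m <+: str z n := by
  induction n with
  | zero => simp_all
  | succ n ih =>
    rcases Nat.lt_or_ge m (n + 1) with h' | h'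
    · exact (ih (by omega)).trans (by rw [str_succ]; exact List.prefix_append _ _)
    · have : m = n + 1 := by omega
      subst this; exact List.prefix_refl _

lemma str_congr {z w : Cantor} {n : ℕ} (h : ∀ i < n, z i = w i) : str z n = str w n := by
  unfold str
  congr 1
  funext i
  exact h i i.2


/-! ### The tree construction -/

def trunc (N : ℕ) (x : Cantor) : Cantor := fun i => if i < N then x i else false

lemma cyl_trunc (N : ℕ) (x : Cantor) : cyl N (trunc N x) = cyl N x := by
  ext y
  constructor <;> intro h i hi <;> have := h i hi <;> simpa [trunc, hi] using this

lemma exists_ext (D : ℕ → Set Cantor) (hD : ∀ n, IsOpen (D n) ∧ Dense (D n)) (n ℓ : ℕ)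
    (f : Cantor) :
    ∃ p : ℕ × Cantor, ℓ < p.1 ∧ (∀ i < ℓ, p.2 i = f i) ∧ (∀ i, p.1 ≤ i → p.2 i = false) ∧
      cyl p.1 p.2 ⊆ D n := by
  obtain ⟨y, hyD, hyc⟩ : ∃ y, y ∈ D n ∧ y ∈ cyl ℓ f := by
    have := (hD n).2.inter_open_nonempty (cyl ℓ f) (isOpen_cyl ℓ f) ⟨f, self_mem_cyl ℓ f⟩
    obtain ⟨y, hy1, hy2⟩ := this
    exact ⟨y, hy2, hy1⟩
  obtain ⟨N₁, hN₁⟩ := exists_cyl_subset (hD n).1 hyD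
  refine ⟨⟨max (ℓ + 1) N₁, trunc (max (ℓ + 1) N₁) y⟩, by simp, ?_, ?_, ?_⟩
  · intro i hi
    have h1 : i < max (ℓ + 1) N₁ := by omega
    simpa [trunc, h1] using hyc i hi
  · intro i hi
    simp only [trunc, Nat.not_lt.2 hi, if_false]
  · intro u hu
    apply hN₁
    intro i hi
    have h1 : i < max (ℓ + 1) N₁ := lt_of_lt_of_le hi (le_max_right _ _)
    have := hu i h1
    simpa [trunc, h1] using this

structure Lvl where
  len : ℕ
  nd : List Bool → Cantor

variable (D : ℕ → Set Cantor) (hD : ∀ n, IsOpen (D n) ∧ Dense (D n))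

noncomputable def extFn (n ℓ : ℕ) (f : Cantor) : ℕ × Cantor := Classical.choose (exists_ext D hD n ℓ f)

lemma extFn_spec (n ℓ : ℕ) (f : Cantor) :
    ℓ < (extFn D hD n ℓ f).1 ∧ (∀ i < ℓ, (extFn D hD n ℓ f).2 i = f i) ∧
      (∀ i, (extFn D hD n ℓ f).1 ≤ i → (extFn D hD n ℓ f).2 i = false) ∧
      cyl (extFn D hD n ℓ f).1 (extFn D hD n ℓ f).2 ⊆ D n :=
  Classical.choose_spec (exists_ext D hD n ℓ f)

noncomputable def stepPre (n : ℕ) (P : Lvl) (σ : List Bool) (ℓ : ℕ) : ℕ × Cantor :=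
  extFn D hD n ℓ (P.nd σ.dropLast)

noncomputable def stepL (n : ℕ) (P : Lvl) (k : ℕ) : ℕ :=
  Nat.rec P.len (fun k ih => (stepPre D hD n P (strOf (n + 1) k) ih).1) k

@[simp] lemma stepL_zero (n : ℕ) (P : Lvl) : stepL D hD n P 0 = P.len := rfl

lemma stepL_succ (n : ℕ) (P : Lvl) (k : ℕ) :
    stepL D hD n P (k + 1) = (stepPre D hD n P (strOf (n + 1) k) (stepL D hD n P k)).1 := rfl

noncomputable def step (n : ℕ) (P : Lvl) : Lvl where
  len := stepL D hD n P (2 ^ (n + 1))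
  nd := fun σ => (stepPre D hD n P σ (stepL D hD n P (idx σ))).2

variable (N₀ : ℕ) (x₀ : Cantor)

noncomputable def levels (m : ℕ) : Lvl :=
  Nat.rec ⟨N₀, fun _ => trunc N₀ x₀⟩ (fun n ih => step D hD n ih) m

lemma levels_zero : levels D hD N₀ x₀ 0 = ⟨N₀, fun _ => trunc N₀ x₀⟩ := rfl

lemma levels_succ (n : ℕ) :
    levels D hD N₀ x₀ (n + 1) = step D hD n (levels D hD N₀ x₀ n) := rfl

lemma stepL_lt_succ (n : ℕ) (P : Lvl) (k : ℕ) : stepL D hD n P k < stepL D hD n P (k + 1) := by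
  rw [stepL_succ]
  exact (extFn_spec D hD n _ _).1

lemma stepL_mono (n : ℕ) (P : Lvl) {k k' : ℕ} (h : k ≤ k') :
    stepL D hD n P k ≤ stepL D hD n P k' := by
  induction k' with
  | zero => have hk : k = 0 := Nat.le_zero.1 h; subst hk; rfl
  | succ k' ih =>
    rcases Nat.lt_or_ge k (k' + 1) with h' | h'
    · exact le_trans (ih (by omega)) (le_of_lt (stepL_lt_succ D hD n P k'))
    · have hk : k = k' + 1 := by omega
      subst hk; rfl

lemma stepL_ge (n : ℕ) (P : Lvl) (k : ℕ) : P.len ≤ stepL D hD n P k :=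
  stepL_mono D hD n P (Nat.zero_le k)

/-- The key length identity, for strings of the correct length. -/
lemma step_len_eq {n : ℕ} (P : Lvl) {σ : List Bool} (hσ : σ.length = n + 1) :
    (stepPre D hD n P σ (stepL D hD n P (idx σ))).1 = stepL D hD n P (idx σ + 1) := by
  have h : strOf (n + 1) (idx σ) = σ := by rw [← hσ]; exact strOf_idx σ
  rw [stepL_succ, h]

lemma levels_len_succ (n : ℕ) :
    (levels D hD N₀ x₀ n).len < (levels D hD N₀ x₀ (n + 1)).len := by
  show (levels D hD N₀ x₀ n).len < stepL D hD n _ (2 ^ (n + 1))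
  calc (levels D hD N₀ x₀ n).len = stepL D hD n (levels D hD N₀ x₀ n) 0 := rfl
    _ < stepL D hD n _ 1 := stepL_lt_succ D hD n _ 0
    _ ≤ _ := stepL_mono D hD n _ Nat.one_le_two_pow

lemma levels_len_mono {m n : ℕ} (h : m ≤ n) :
    (levels D hD N₀ x₀ m).len ≤ (levels D hD N₀ x₀ n).len := by
  induction n with
  | zero =>
    have hm : m = 0 := by omega
    subst hm; rfl
  | succ n ih =>
    rcases Nat.lt_or_ge m (n + 1) with h' | h'
    · exact le_trans (ih (by omega)) (le_of_lt (levels_len_succ D hD N₀ x₀ n))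
    · have hm : m = n + 1 := by omega
      subst hm; rfl

lemma levels_len_ge (n : ℕ) : n ≤ (levels D hD N₀ x₀ n).len := by
  induction n with
  | zero => exact Nat.zero_le _
  | succ n ih => exact lt_of_le_of_lt ih (levels_len_succ D hD N₀ x₀ n)

/-- Normalization: nodes vanish beyond the level length. -/
lemma levels_norm : ∀ n, ∀ σ : List Bool, σ.length = n → ∀ i, (levels D hD N₀ x₀ n).len ≤ i →
    (levels D hD N₀ x₀ n).nd σ i = false := by
  intro n
  induction n with
  | zero => intro σ _ i hi; rw [levels_zero] at hi ⊢; simp only [trunc, Nat.not_lt.2 hi, if_false]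
  | succ n _ =>
    intro σ hσ i hi
    rw [levels_succ] at hi ⊢
    show (stepPre D hD n _ σ _).2 i = false
    apply (extFn_spec D hD n _ _).2.2.1
    calc (stepPre D hD n _ σ _).1
        = stepL D hD n _ (idx σ + 1) := step_len_eq D hD _ hσ
      _ ≤ stepL D hD n _ (2 ^ (n + 1)) := stepL_mono D hD n _ (by have h2 := idx_lt σ; rw [hσ] at h2; omega)
      _ ≤ i := hi



/-- Agreement of a node with its parent. -/
lemma levels_agree {n : ℕ} {σ : List Bool} (hσ : σ.length = n + 1) {i : ℕ}
    (hi : i < (levels D hD N₀ x₀ n).len) :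
    (levels D hD N₀ x₀ (n + 1)).nd σ i = (levels D hD N₀ x₀ n).nd σ.dropLast i := by
  rw [levels_succ]
  show (stepPre D hD n _ σ _).2 i = _
  exact (extFn_spec D hD n _ _).2.1 i (lt_of_lt_of_le hi (stepL_ge D hD n _ _))

/-- Nodes of level `n+1` have cylinders inside `D n`. -/
lemma levels_mem_D {n : ℕ} {σ : List Bool} (hσ : σ.length = n + 1) :
    cyl (levels D hD N₀ x₀ (n + 1)).len ((levels D hD N₀ x₀ (n + 1)).nd σ) ⊆ D n := by
  set P := levels D hD N₀ x₀ n
  have hlen : (stepPre D hD n P σ (stepL D hD n P (idx σ))).1 ≤ (levels D hD N₀ x₀ (n + 1)).len := by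
    rw [levels_succ]
    show _ ≤ stepL D hD n P (2 ^ (n + 1))
    rw [step_len_eq D hD P hσ]
    exact stepL_mono D hD n P (by have h2 := idx_lt σ; rw [hσ] at h2; omega)
  intro u hu
  apply (extFn_spec D hD n (stepL D hD n P (idx σ)) (P.nd σ.dropLast)).2.2.2
  intro i hi
  exact hu i (lt_of_lt_of_le hi hlen)

/-- Where the `true`s of a node can be. -/
lemma levels_trues {n : ℕ} {σ : List Bool} (hσ : σ.length = n + 1) {i : ℕ}
    (h : (levels D hD N₀ x₀ (n + 1)).nd σ i = true) :
    (i < (levels D hD N₀ x₀ n).len ∧ (levels D hD N₀ x₀ n).nd σ.dropLast i = true) ∨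
      (stepL D hD n (levels D hD N₀ x₀ n) (idx σ) ≤ i ∧
        i < stepL D hD n (levels D hD N₀ x₀ n) (idx σ + 1)) := by
  set P := levels D hD N₀ x₀ n with hP
  have hval : (levels D hD N₀ x₀ (n + 1)).nd σ = (stepPre D hD n P σ (stepL D hD n P (idx σ))).2 := by
    rw [levels_succ]; rfl
  rw [hval] at h
  rcases Nat.lt_or_ge i (stepL D hD n P (idx σ)) with h1 | h1
  · left
    have hag : (stepPre D hD n P σ (stepL D hD n P (idx σ))).2 i = P.nd σ.dropLast i :=
      (extFn_spec D hD n _ _).2.1 i h1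
    rw [hag] at h
    rcases Nat.lt_or_ge i P.len with h2 | h2
    · exact ⟨h2, h⟩
    · exfalso
      have : P.nd σ.dropLast i = false :=
        levels_norm D hD N₀ x₀ n σ.dropLast (by simp [hσ]) i h2
      rw [this] at h; exact Bool.false_ne_true h
  · right
    refine ⟨h1, ?_⟩
    by_contra h2
    push_neg at h2
    rw [← step_len_eq D hD P hσ] at h2
    have : (stepPre D hD n P σ (stepL D hD n P (idx σ))).2 i = false :=
      (extFn_spec D hD n _ _).2.2.1 i h2
    rw [this] at h; exact Bool.false_ne_true h

/-- Two prefixes of the same list with equal length are equal. -/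
lemma prefix_eq_of_length {l₁ l₂ σ : List Bool} (h1 : l₁ <+: σ) (h2 : l₂ <+: σ)
    (h : l₁.length = l₂.length) : l₁ = l₂ :=
  (List.prefix_of_prefix_length_le h1 h2 h.le).eq_of_length h

lemma prefix_dropLast {l σ : List Bool} (h : l <+: σ) (hlen : l.length + 1 ≤ σ.length - 1 + 1)
    (hσ : σ ≠ []) (hne : l.length ≠ σ.length) : l <+: σ.dropLast := by
  obtain ⟨t, rfl⟩ := h
  have ht : t ≠ [] := by
    rintro rfl
    simp at hne
  rw [List.dropLast_append_of_ne_nil ht]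
  exact List.prefix_append _ _

/-- The main almost-disjointness invariant of the tree. -/
lemma levels_inv : ∀ n : ℕ, ∀ ρ : List Bool, ∀ b₁ b₂ : Bool, b₁ ≠ b₂ →
    ∀ σ τ : List Bool, (ρ ++ [b₁]) <+: σ → (ρ ++ [b₂]) <+: τ →
    σ.length = n → τ.length = n → ∀ i : ℕ,
    (levels D hD N₀ x₀ n).nd σ i = true → (levels D hD N₀ x₀ n).nd τ i = true →
    i < (levels D hD N₀ x₀ ρ.length).len := by
  intro n
  induction n with
  | zero =>
    intro ρ b₁ b₂ _ σ τ hp1 _ hσ _ i _ _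
    exfalso
    have := hp1.length_le
    simp [hσ] at this
  | succ n ih =>
    intro ρ b₁ b₂ hb σ τ hp1 hp2 hσ hτ i h1 h2
    have hρlen : ρ.length + 1 ≤ n + 1 := by
      have := hp1.length_le
      simp [hσ] at this
      omega
    have hστ : σ ≠ τ := by
      rintro rfl
      have := prefix_eq_of_length hp1 hp2 (by simp)
      simp at this
      exact hb this
    have hidx : idx σ ≠ idx τ := fun h => hστ (idx_inj (hσ.trans hτ.symm) h)
    rcases levels_trues D hD N₀ x₀ hσ h1 with ⟨hi1, hv1⟩ | ⟨hl1, hr1⟩ <;>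
      rcases levels_trues D hD N₀ x₀ hτ h2 with ⟨hi2, hv2⟩ | ⟨hl2, hr2⟩
    · -- both inherited from parents
      rcases Nat.lt_or_ge ρ.length n with hcase | hcase
      · -- apply induction hypothesis to the parents
        refine ih ρ b₁ b₂ hb σ.dropLast τ.dropLast ?_ ?_ (by simp [hσ]) (by simp [hτ]) i hv1 hv2
        · exact prefix_dropLast hp1 (by simp [hσ]; omega) (by rintro rfl; simp at hσ)
            (by simp [hσ]; omega)
        · exact prefix_dropLast hp2 (by simp [hτ]; omega) (by rintro rfl; simp at hτ)
            (by simp [hτ]; omega)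
      · -- ρ has length n : the parents coincide, and i < level-n length
        have : ρ.length = n := by omega
        rw [this]
        exact hi1
    · -- mixed: impossible
      exfalso
      exact absurd hi1 (not_lt.2 (le_trans (stepL_ge D hD n _ _) hl2))
    · exfalso
      exact absurd hi2 (not_lt.2 (le_trans (stepL_ge D hD n _ _) hl1))
    · -- both fresh: the fresh intervals are disjoint
      exfalso
      rcases Nat.lt_or_ge (idx σ) (idx τ) with hc | hc
      · have := stepL_mono D hD n (levels D hD N₀ x₀ n) (show idx σ + 1 ≤ idx τ by omega)
        omega
      · have hc' : idx τ < idx σ := by omega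
        have := stepL_mono D hD n (levels D hD N₀ x₀ n) (show idx τ + 1 ≤ idx σ by omega)
        omega

noncomputable def branch (z : Cantor) : Cantor :=
  fun i => (levels D hD N₀ x₀ (i + 1)).nd (str z (i + 1)) i

/-- Coherence: the levels of the tree agree along a branch. -/
lemma levels_coherent (z : Cantor) {m m' : ℕ} (h : m ≤ m') {i : ℕ}
    (hi : i < (levels D hD N₀ x₀ m).len) :
    (levels D hD N₀ x₀ m').nd (str z m') i = (levels D hD N₀ x₀ m).nd (str z m) i := by
  induction m' with
  | zero =>
    have hm : m = 0 := by omega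
    subst hm; rfl
  | succ m' ih =>
    rcases Nat.lt_or_ge m (m' + 1) with h' | h'
    · have h1 : (levels D hD N₀ x₀ (m' + 1)).nd (str z (m' + 1)) i =
          (levels D hD N₀ x₀ m').nd (str z (m' + 1)).dropLast i := by
        apply levels_agree D hD N₀ x₀ (by simp)
        exact lt_of_lt_of_le hi (levels_len_mono D hD N₀ x₀ (by omega))
      rw [h1, str_dropLast]
      exact ih (by omega)
    · have hm : m = m' + 1 := by omega
      subst hm; rfl

lemma branch_eq (z : Cantor) {m i : ℕ} (hi : i < (levels D hD N₀ x₀ m).len) :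
    branch D hD N₀ x₀ z i = (levels D hD N₀ x₀ m).nd (str z m) i := by
  rcases le_or_gt (i + 1) m with h | h
  · exact (levels_coherent D hD N₀ x₀ z h
      (lt_of_lt_of_le (levels_len_ge D hD N₀ x₀ (i + 1)) (levels_len_mono D hD N₀ x₀ (le_refl _)))).symm
  · exact levels_coherent D hD N₀ x₀ z (by omega) hi

lemma branch_mem_cyl (z : Cantor) (m : ℕ) :
    branch D hD N₀ x₀ z ∈ cyl (levels D hD N₀ x₀ m).len ((levels D hD N₀ x₀ m).nd (str z m)) :=
  fun i hi => branch_eq D hD N₀ x₀ z hi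

lemma branch_mem_D (z : Cantor) (n : ℕ) : branch D hD N₀ x₀ z ∈ D n :=
  levels_mem_D D hD N₀ x₀ (by simp) (branch_mem_cyl D hD N₀ x₀ z (n + 1))

lemma branch_mem_base (z : Cantor) : branch D hD N₀ x₀ z ∈ cyl N₀ x₀ := by
  rw [← cyl_trunc]
  exact branch_mem_cyl D hD N₀ x₀ z 0

lemma branch_ad {z w : Cantor} (hzw : z ≠ w) :
    (cset (branch D hD N₀ x₀ z) ∩ cset (branch D hD N₀ x₀ w)).Finite := by
  have hne : ∃ j, z j ≠ w j := by
    by_contra h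
    push_neg at h
    exact hzw (funext h)
  classical
  let d := Nat.find hne
  have hd : z d ≠ w d := Nat.find_spec hne
  have hagree : ∀ j < d, z j = w j := fun j hj => by
    by_contra h
    exact Nat.find_min hne hj h
  apply Set.Finite.subset (Set.finite_Iio (levels D hD N₀ x₀ d).len)
  rintro i ⟨h1, h2⟩
  simp only [cset, mem_setOf_eq] at h1 h2
  set n := max (d + 1) (i + 1) with hn
  have hilen : i < (levels D hD N₀ x₀ n).len :=
    lt_of_lt_of_le (by omega) (le_trans (levels_len_ge D hD N₀ x₀ n) (le_refl _))
  have hz : (levels D hD N₀ x₀ n).nd (str z n) i = true := by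
    rw [← branch_eq D hD N₀ x₀ z hilen]; exact h1
  have hw : (levels D hD N₀ x₀ n).nd (str w n) i = true := by
    rw [← branch_eq D hD N₀ x₀ w hilen]; exact h2
  have hpz : (str z d ++ [z d]) <+: str z n := by
    rw [← str_succ]
    exact str_prefix z (by omega)
  have hpw : (str z d ++ [w d]) <+: str w n := by
    rw [show str z d = str w d from str_congr hagree, ← str_succ]
    exact str_prefix w (by omega)
  have := levels_inv D hD N₀ x₀ n (str z d) (z d) (w d) hd (str z n) (str w n) hpz hpw
    (by simp) (by simp) i hz hw
  simpa using this

/-! ### The combinatorial lemma -/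

lemma no_bad_family {α ι : Type*} [DecidableEq α] :
    ∀ n : ℕ, ∀ (I : Set ι) (F G : ι → Finset α), ¬ I.Countable →
      (∀ i ∈ I, Disjoint (F i) (G i)) → (∀ i ∈ I, (F i ∪ G i).card ≤ n) →
      (∀ i ∈ I, ∀ j ∈ I, i ≠ j → (F i ∩ G j).Nonempty ∨ (F j ∩ G i).Nonempty) → False := by
  intro n
  induction n with
  | zero =>
    intro I F G hI hdisj hcard hbad
    obtain ⟨i, hi, j, hj, hij⟩ : ∃ i ∈ I, ∃ j ∈ I, i ≠ j := by
      by_contra h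
      push_neg at h
      apply hI
      rcases Set.eq_empty_or_nonempty I with hI0 | ⟨i, hi⟩
      · rw [hI0]; exact Set.countable_empty
      · have : I ⊆ {i} := fun j hj => by
          rcases h i hi j hj with rfl
          rfl
        exact (Set.countable_singleton i).mono this
    have h0 : F i = ∅ := by
      have := hcard i hi
      have h1 : F i ⊆ F i ∪ G i := Finset.subset_union_left
      have h2 : (F i ∪ G i) = ∅ := Finset.card_eq_zero.1 (by omega)
      rw [h2] at h1
      exact Finset.subset_empty.1 h1
    have h0' : F j = ∅ := by
      have := hcard j hj
      have h1 : F j ⊆ F j ∪ G j := Finset.subset_union_left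
      have h2 : (F j ∪ G j) = ∅ := Finset.card_eq_zero.1 (by omega)
      rw [h2] at h1
      exact Finset.subset_empty.1 h1
    rcases hbad i hi j hj hij with ⟨b, hb⟩ | ⟨b, hb⟩
    · rw [Finset.mem_inter, h0] at hb; exact absurd hb.1 (Finset.notMem_empty b)
    · rw [Finset.mem_inter, h0'] at hb; exact absurd hb.1 (Finset.notMem_empty b)
  | succ n ih =>
    intro I F G hI hdisj hcard hbad
    by_cases hex : ∃ a, ¬ {i ∈ I | a ∈ F i ∪ G i}.Countable
    · obtain ⟨a, ha⟩ := hex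
      have hsplit : {i ∈ I | a ∈ F i ∪ G i} ⊆ {i ∈ I | a ∈ F i} ∪ {i ∈ I | a ∈ G i} := by
        intro i ⟨hi, hmem⟩
        rcases Finset.mem_union.1 hmem with h | h
        · exact Or.inl ⟨hi, h⟩
        · exact Or.inr ⟨hi, h⟩
      have honeside : ¬ {i ∈ I | a ∈ F i}.Countable ∨ ¬ {i ∈ I | a ∈ G i}.Countable := by
        by_contra h
        push_neg at h
        exact ha (((h.1.union h.2).mono hsplit))
      rcases honeside with hF | hG
      · -- a belongs to F i for uncountably many i : erase it from the F's
        refine ih {i ∈ I | a ∈ F i} (fun i => (F i).erase a) G hF ?_ ?_ ?_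
        · exact fun i hi => Finset.disjoint_of_subset_left (Finset.erase_subset a (F i))
            (hdisj i hi.1)
        · intro i hi
          have hanG : a ∉ G i := Finset.disjoint_left.1 (hdisj i hi.1) hi.2
          have h1 : (F i).erase a ∪ G i = (F i ∪ G i).erase a := by
            rw [Finset.erase_union_distrib, Finset.erase_eq_of_notMem hanG]
          rw [h1, Finset.card_erase_of_mem (Finset.mem_union_left _ hi.2)]
          have := hcard i hi.1
          omega
        · intro i hi j hj hij
          rcases hbad i hi.1 j hj.1 hij with ⟨b, hb⟩ | ⟨b, hb⟩
          · rw [Finset.mem_inter] at hb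
            have hbna : b ≠ a := by
              rintro rfl
              exact Finset.disjoint_left.1 (hdisj j hj.1) hj.2 hb.2
            exact Or.inl ⟨b, Finset.mem_inter.2 ⟨Finset.mem_erase.2 ⟨hbna, hb.1⟩, hb.2⟩⟩
          · rw [Finset.mem_inter] at hb
            have hbna : b ≠ a := by
              rintro rfl
              exact Finset.disjoint_left.1 (hdisj i hi.1) hi.2 hb.2
            exact Or.inr ⟨b, Finset.mem_inter.2 ⟨Finset.mem_erase.2 ⟨hbna, hb.1⟩, hb.2⟩⟩
      · -- a belongs to G i for uncountably many i : erase it from the G's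
        refine ih {i ∈ I | a ∈ G i} F (fun i => (G i).erase a) hG ?_ ?_ ?_
        · exact fun i hi => Finset.disjoint_of_subset_right (Finset.erase_subset a (G i))
            (hdisj i hi.1)
        · intro i hi
          have hanF : a ∉ F i := fun h => Finset.disjoint_left.1 (hdisj i hi.1) h hi.2
          have h1 : F i ∪ (G i).erase a = (F i ∪ G i).erase a := by
            rw [Finset.erase_union_distrib, Finset.erase_eq_of_notMem hanF]
          rw [h1, Finset.card_erase_of_mem (Finset.mem_union_right _ hi.2)]
          have := hcard i hi.1
          omega
        · intro i hi j hj hij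
          rcases hbad i hi.1 j hj.1 hij with ⟨b, hb⟩ | ⟨b, hb⟩
          · rw [Finset.mem_inter] at hb
            have hbna : b ≠ a := by
              rintro rfl
              exact Finset.disjoint_left.1 (hdisj i hi.1) hb.1 hi.2
            exact Or.inl ⟨b, Finset.mem_inter.2 ⟨hb.1, Finset.mem_erase.2 ⟨hbna, hb.2⟩⟩⟩
          · rw [Finset.mem_inter] at hb
            have hbna : b ≠ a := by
              rintro rfl
              exact Finset.disjoint_left.1 (hdisj j hj.1) hb.1 hj.2
            exact Or.inr ⟨b, Finset.mem_inter.2 ⟨hb.1, Finset.mem_erase.2 ⟨hbna, hb.2⟩⟩⟩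
    · -- every point is in only countably many supports : contradiction
      push_neg at hex
      obtain ⟨i₀, hi₀⟩ : I.Nonempty := by
        rcases Set.eq_empty_or_nonempty I with h | h
        · exact absurd (h ▸ Set.countable_empty) hI
        · exact h
      apply hI
      have hsub : I ⊆ insert i₀ (⋃ a ∈ (↑(F i₀ ∪ G i₀) : Set α), {i ∈ I | a ∈ F i ∪ G i}) := by
        intro i hi
        by_cases hii : i = i₀
        · exact hii ▸ Set.mem_insert _ _
        · apply Set.mem_insert_of_mem
          rcases hbad i hi i₀ hi₀ hii with ⟨b, hb⟩ | ⟨b, hb⟩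
          · rw [Finset.mem_inter] at hb
            exact Set.mem_biUnion (by simp [hb.2]) ⟨hi, Finset.mem_union_left _ hb.1⟩
          · rw [Finset.mem_inter] at hb
            exact Set.mem_biUnion (by simp [hb.1]) ⟨hi, Finset.mem_union_right _ hb.2⟩
      refine Set.Countable.mono hsub ?_
      refine (Set.Countable.biUnion ?_ fun a _ => hex a).insert i₀
      exact (Finset.countable_toSet _)

/-! ### From the Baire property to a comeager cylinder -/

lemma comeager_setup {Hs : Set Cantor} (hBP : HasBP Hs) (hM : ¬ IsMeagre Hs) :
    ∃ (N₀ : ℕ) (x₀ : Cantor) (D : ℕ → Set Cantor), (∀ n, IsOpen (D n) ∧ Dense (D n)) ∧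
      ∀ x, x ∈ cyl N₀ x₀ → (∀ n, x ∈ D n) → x ∈ Hs := by
  obtain ⟨U, hUo, hUm⟩ := hBP
  have hUne : U.Nonempty := by
    rcases Set.eq_empty_or_nonempty U with h | h
    · exfalso
      apply hM
      apply hUm.mono
      intro x hx
      exact Or.inl ⟨hx, by simp [h]⟩
    · exact h
  obtain ⟨y, hy⟩ := hUne
  obtain ⟨N₀, hcyl⟩ := exists_cyl_subset hUo hy
  have hmeag : IsMeagre (cyl N₀ y \ Hs) := hUm.mono fun x hx => Or.inr ⟨hcyl hx.1, hx.2⟩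
  rw [IsMeagre, mem_residual_iff] at hmeag
  obtain ⟨S, hSo, hSd, hSc, hSsub⟩ := hmeag
  obtain ⟨f, hf⟩ := (hSc.insert Set.univ).exists_eq_range (Set.insert_nonempty _ _)
  refine ⟨N₀, y, f, ?_, ?_⟩
  · intro n
    have hfn : f n ∈ insert Set.univ S := by rw [hf]; exact Set.mem_range_self n
    rcases Set.mem_insert_iff.1 hfn with h | h
    · rw [h]; exact ⟨isOpen_univ, dense_univ⟩
    · exact ⟨hSo _ h, hSd _ h⟩
  · intro x hx hxD
    have hxS : x ∈ ⋂₀ S := by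
      intro t ht
      have h1 : t ∈ insert Set.univ S := Set.mem_insert_of_mem _ ht
      rw [hf] at h1
      obtain ⟨n, rfl⟩ := h1
      exact hxD n
    have hc := hSsub hxS
    by_contra hxH
    exact hc ⟨hx, hxH⟩

/-! ### Facts about `sigmaFG` -/

lemma mem_sigmaFG {F G : Finset (Set ℕ)} {i : ℕ} :
    i ∈ sigmaFG F G ↔ (∀ a ∈ F, i ∈ a) ∧ (∀ b ∈ G, i ∉ b) := by
  simp [sigmaFG]

lemma sigmaFG_union [DecidableEq (Set ℕ)] (F₁ G₁ F₂ G₂ : Finset (Set ℕ)) :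
    sigmaFG (F₁ ∪ F₂) (G₁ ∪ G₂) = sigmaFG F₁ G₁ ∩ sigmaFG F₂ G₂ := by
  ext i
  simp only [mem_sigmaFG, Set.mem_inter_iff, Finset.mem_union]
  constructor
  · rintro ⟨h1, h2⟩
    exact ⟨⟨fun a ha => h1 a (Or.inl ha), fun b hb => h2 b (Or.inl hb)⟩,
      ⟨fun a ha => h1 a (Or.inr ha), fun b hb => h2 b (Or.inr hb)⟩⟩
  · rintro ⟨⟨h1, h2⟩, ⟨h3, h4⟩⟩
    exact ⟨fun a ha => ha.elim (h1 a) (h3 a), fun b hb => hb.elim (h2 b) (h4 b)⟩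

/-! ### The main lemma : `H` is meager -/

lemma H_meager (X : Set (Set ℕ)) (hX : IsIndependentFamily X)
    (hBP : HasBP {x : Cantor | ∃ F G : Finset (Set ℕ), ↑F ⊆ X ∧ ↑G ⊆ X ∧ Disjoint F G ∧
      (sigmaFG F G \ cset x).Finite}) :
    IsMeagre {x : Cantor | ∃ F G : Finset (Set ℕ), ↑F ⊆ X ∧ ↑G ⊆ X ∧ Disjoint F G ∧
      (sigmaFG F G \ cset x).Finite} := by
  classical
  by_contra hM
  obtain ⟨N₀, x₀, D, hD, hkey⟩ := comeager_setup hBP hM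
  have hmem : ∀ z : Cantor, ∃ F G : Finset (Set ℕ), ↑F ⊆ X ∧ ↑G ⊆ X ∧ Disjoint F G ∧
      (sigmaFG F G \ cset (branch D hD N₀ x₀ z)).Finite := fun z =>
    hkey (branch D hD N₀ x₀ z) (branch_mem_base D hD N₀ x₀ z) (branch_mem_D D hD N₀ x₀ z)
  choose F G hF hG hdisj hfin using hmem
  have hbad : ∀ z w : Cantor, z ≠ w → (F z ∩ G w).Nonempty ∨ (F w ∩ G z).Nonempty := by
    intro z w hzw
    by_contra hcon
    push_neg at hcon
    obtain ⟨h1, h2⟩ := hcon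
    have hdisj2 : Disjoint (F z ∪ F w) (G z ∪ G w) := by
      rw [Finset.disjoint_left]
      intro a ha hga
      rcases Finset.mem_union.1 ha with h | h <;> rcases Finset.mem_union.1 hga with h' | h'
      · exact Finset.disjoint_left.1 (hdisj z) h h'
      · have hmem2 : a ∈ F z ∩ G w := Finset.mem_inter.2 ⟨h, h'⟩
        rw [h1] at hmem2
        exact Finset.notMem_empty a hmem2
      · have hmem2 : a ∈ F w ∩ G z := Finset.mem_inter.2 ⟨h, h'⟩
        rw [h2] at hmem2
        exact Finset.notMem_empty a hmem2
      · exact Finset.disjoint_left.1 (hdisj w) h h'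
    have hinf := hX (F z ∪ F w) (G z ∪ G w)
      (by push_cast; exact Set.union_subset (hF z) (hF w))
      (by push_cast; exact Set.union_subset (hG z) (hG w)) hdisj2
    apply hinf
    rw [sigmaFG_union]
    have hADzw := branch_ad D hD N₀ x₀ hzw
    apply Set.Finite.subset (((hfin z).union (hfin w)).union hADzw)
    rintro i ⟨hiz, hiw⟩
    by_cases hz : i ∈ cset (branch D hD N₀ x₀ z)
    · by_cases hw : i ∈ cset (branch D hD N₀ x₀ w)
      · exact Or.inr ⟨hz, hw⟩
      · exact Or.inl (Or.inr ⟨hiw, hw⟩)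
    · exact Or.inl (Or.inl ⟨hiz, hz⟩)
  have huncount : ¬ (Set.univ : Set Cantor).Countable := by
    have := uncountable_cantor
    exact Set.not_countable_univ
  have hex : ∃ n, ¬ {z : Cantor | (F z ∪ G z).card = n}.Countable := by
    by_contra h
    push_neg at h
    apply huncount
    have hsub : (Set.univ : Set Cantor) ⊆ ⋃ n, {z | (F z ∪ G z).card = n} := fun z _ =>
      Set.mem_iUnion.2 ⟨_, rfl⟩
    exact (Set.countable_iUnion h).mono hsub
  obtain ⟨n, hn⟩ := hex
  exact no_bad_family n {z : Cantor | (F z ∪ G z).card = n} F G hn (fun i _ => hdisj i)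
    (fun i hi => le_of_eq hi) (fun i _ j _ hij => hbad i j hij)

end HKAux

/-- If `X` is an independent family, then
`H = { x : ∃ disjoint finite F,G ⊆ X, σ(F,G) \ x finite }` and
`K = { x : ∃ disjoint finite F,G ⊆ X, σ(F,G) ∩ x finite }` are meager, provided they have
the Baire property. -/
theorem H_and_K_meager (X : Set (Set ℕ)) (hX : IsIndependentFamily X)
    (hH : HasBP {x : Cantor | ∃ F G : Finset (Set ℕ), ↑F ⊆ X ∧ ↑G ⊆ X ∧ Disjoint F G ∧
      (sigmaFG F G \ cset x).Finite})
    (hK : HasBP {x : Cantor | ∃ F G : Finset (Set ℕ), ↑F ⊆ X ∧ ↑G ⊆ X ∧ Disjoint F G ∧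
      (sigmaFG F G ∩ cset x).Finite}) :
    IsMeagre {x : Cantor | ∃ F G : Finset (Set ℕ), ↑F ⊆ X ∧ ↑G ⊆ X ∧ Disjoint F G ∧
      (sigmaFG F G \ cset x).Finite} ∧
    IsMeagre {x : Cantor | ∃ F G : Finset (Set ℕ), ↑F ⊆ X ∧ ↑G ⊆ X ∧ Disjoint F G ∧
      (sigmaFG F G ∩ cset x).Finite} := by
  classical
  have hHm := HKAux.H_meager X hX hH
  refine ⟨hHm, ?_⟩
  set e : Cantor → Cantor := fun x n => !(x n) with he
  have hcont : Continuous e :=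
    continuous_pi fun n => (continuous_of_discreteTopology (f := Bool.not)).comp
      (continuous_apply n)
  have hinv : ∀ x, e (e x) = x := fun x => by funext n; simp [he]
  have hopen : IsOpenMap e := by
    intro U hU
    have himg : e '' U = e ⁻¹' U := by
      ext x
      constructor
      · rintro ⟨z, hz, rfl⟩
        simpa [Set.mem_preimage, hinv z] using hz
      · intro hx
        exact ⟨e x, hx, hinv x⟩
    rw [himg]
    exact hU.preimage hcont
  have hset : ∀ (x : Cantor) (F G : Finset (Set ℕ)),
      sigmaFG F G \ cset (e x) = sigmaFG F G ∩ cset x := by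
    intro x F G
    ext i
    simp [cset, he, Set.mem_diff]
  have hKeq : {x : Cantor | ∃ F G : Finset (Set ℕ), ↑F ⊆ X ∧ ↑G ⊆ X ∧ Disjoint F G ∧
      (sigmaFG F G ∩ cset x).Finite} = e ⁻¹' {x : Cantor | ∃ F G : Finset (Set ℕ),
      ↑F ⊆ X ∧ ↑G ⊆ X ∧ Disjoint F G ∧ (sigmaFG F G \ cset x).Finite} := by
    ext x
    simp only [Set.mem_setOf_eq, Set.mem_preimage]
    constructor <;> rintro ⟨F, G, h1, h2, h3, h4⟩ <;> refine ⟨F, G, h1, h2, h3, ?_⟩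
    · rw [hset x F G]; exact h4
    · rw [hset x F G] at h4; exact h4
  rw [hKeq]
  exact hHm.preimage_of_isOpenMap hcont hopen
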